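/- Sphere-packing for the 0^k-indel channel: if C ⊆ Z_q^n corrects t insertions and deletions of blocks 0^k, and every codeword x ∈ C has Hamming weight w and at least m runs of zeros of length ≥ k, then for any 0 ≤ s ≤ min(t, m), |C| · C(w+s, s) · C(m-s, t-s) ≤ q^{n + k(2s - t)} (assuming n + k(2s−t) ≥ 0). -/

import Mathlib

/-- The Hamming weight of a string over `ℤ_q`. -/
def wt (q : ℕ) (x : List (ZMod q)) : ℕ := x.countP fun a => decide (a ≠ 0)

/-- The list `[r_0(x), …, r_w(x)]` of lengths of the runs of zeros of `x`. -/
def zeroRuns (q : ℕ) : List (ZMod q) → List ℕ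
  | [] => [0]
  | a :: rest =>
    if a = 0 then
      match zeroRuns q rest with
      | r :: rs => (r + 1) :: rs
      | [] => [1]
    else 0 :: zeroRuns q rest

/-- One insertion of a block `0^k` at some position of the string `x`. -/
def Ins (q k : ℕ) (x y : List (ZMod q)) : Prop :=
  ∃ j ≤ x.length, y = x.take j ++ List.replicate k (0 : ZMod q) ++ x.drop j

/-- One deletion of a block of `k` consecutive zeros. -/
def Del (q k : ℕ) (x y : List (ZMod q)) : Prop := Ins q k y x

/-- `IndelN q k a b x y`: `y` is obtainable from `x` by `a` insertions and `b`
deletions of blocks `0^k`, in any order. -/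
inductive IndelN (q k : ℕ) : ℕ → ℕ → List (ZMod q) → List (ZMod q) → Prop
  | refl (x : List (ZMod q)) : IndelN q k 0 0 x x
  | ins {a b : ℕ} {x z y : List (ZMod q)} :
      Ins q k x z → IndelN q k a b z y → IndelN q k (a + 1) b x y
  | del {a b : ℕ} {x z y : List (ZMod q)} :
      Del q k x z → IndelN q k a b z y → IndelN q k a (b + 1) x y

namespace Stmt16

variable {q k : ℕ}

def build (q : ℕ) : List ℕ → List (ZMod q) → List (ZMod q)
  | [], _ => []
  | r :: _, [] => List.replicate r 0
  | r :: rs, a :: as => List.replicate r 0 ++ a :: build q rs as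

lemma zeroRuns_ne_nil (l : List (ZMod q)) : zeroRuns q l ≠ [] := by
  induction l with
  | nil => simp [zeroRuns]
  | cons a l ih =>
    by_cases h : a = 0
    · subst h
      cases hz : zeroRuns q l with
      | nil => exact absurd hz ih
      | cons r rs => simp [zeroRuns, hz]
    · simp [zeroRuns, h]

lemma zeroRuns_cons_ne (a : ZMod q) (l : List (ZMod q)) (h : a ≠ 0) :
    zeroRuns q (a :: l) = 0 :: zeroRuns q l := by
  simp [zeroRuns, h]

lemma zeroRuns_cons_zero (l : List (ZMod q)) :
    zeroRuns q ((0 : ZMod q) :: l) = ((zeroRuns q l).headD 0 + 1) :: (zeroRuns q l).tail := by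
  cases hz : zeroRuns q l with
  | nil => exact absurd hz (zeroRuns_ne_nil l)
  | cons r rs => simp [zeroRuns, hz]

lemma zeroRuns_replicate_append (r : ℕ) (l : List (ZMod q)) :
    zeroRuns q (List.replicate r (0 : ZMod q) ++ l)
      = ((zeroRuns q l).headD 0 + r) :: (zeroRuns q l).tail := by
  induction r with
  | zero =>
    simp only [List.replicate_zero, List.nil_append, Nat.add_zero]
    cases hz : zeroRuns q l with
    | nil => exact absurd hz (zeroRuns_ne_nil l)
    | cons r rs => simp
  | succ n ih =>
    rw [List.replicate_succ, List.cons_append, zeroRuns_cons_zero, ih]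
    simp; omega

lemma zeroRuns_build (rs : List ℕ) (as : List (ZMod q)) (h : rs.length = as.length + 1)
    (ha : ∀ a ∈ as, a ≠ 0) : zeroRuns q (build q rs as) = rs := by
  induction as generalizing rs with
  | nil =>
    match rs, h with
    | [r], _ =>
      show zeroRuns q (List.replicate r 0) = [r]
      have := zeroRuns_replicate_append (q := q) r []
      simpa [zeroRuns] using this
  | cons a as ih =>
    match rs, h with
    | r :: rs', h =>
      have h' : rs'.length = as.length + 1 := by simpa using h
      show zeroRuns q (List.replicate r 0 ++ a :: build q rs' as) = r :: rs'
      rw [zeroRuns_replicate_append, zeroRuns_cons_ne a _ (ha a (by simp)),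
        ih rs' h' (fun b hb => ha b (by simp [hb]))]
      simp

lemma length_zeroRuns (l : List (ZMod q)) : (zeroRuns q l).length = wt q l + 1 := by
  induction l with
  | nil => simp [zeroRuns, wt]
  | cons a l ih =>
    by_cases h : a = 0
    · subst h
      rw [zeroRuns_cons_zero]
      have := zeroRuns_ne_nil (q := q) l
      simp only [wt, List.countP_cons]
      simp only [wt] at ih
      have : (zeroRuns q l).tail.length = (zeroRuns q l).length - 1 := List.length_tail
      simp [this, ih]
    · rw [zeroRuns_cons_ne a l h]
      simp only [wt, List.countP_cons] at *
      simp [h, ih]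

lemma sum_zeroRuns (l : List (ZMod q)) : (zeroRuns q l).sum + wt q l = l.length := by
  induction l with
  | nil => simp [zeroRuns, wt]
  | cons a l ih =>
    by_cases h : a = 0
    · subst h
      rw [zeroRuns_cons_zero]
      have hnn := zeroRuns_ne_nil (q := q) l
      obtain ⟨r, rs, hz⟩ : ∃ r rs, zeroRuns q l = r :: rs := by
        cases hz : zeroRuns q l with
        | nil => exact absurd hz hnn
        | cons r rs => exact ⟨r, rs, rfl⟩
      rw [hz] at ih ⊢
      simp only [wt, List.countP_cons] at *
      simp at *
      omega
    · rw [zeroRuns_cons_ne a l h]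
      have hc : wt q (a :: l) = wt q l + 1 := by
        simp [wt, List.countP_cons, h]
      simp only [List.sum_cons, List.length_cons]
      omega

lemma length_build (rs : List ℕ) (as : List (ZMod q)) (h : rs.length = as.length + 1) :
    (build q rs as).length = rs.sum + as.length := by
  induction as generalizing rs with
  | nil =>
    match rs, h with
    | [r], _ => simp [build]
  | cons a as ih =>
    match rs, h with
    | r :: rs', h =>
      have h' : rs'.length = as.length + 1 := by simpa using h
      show (List.replicate r 0 ++ a :: build q rs' as).length = _
      simp [ih rs' h', List.sum_cons]
      omega

lemma build_succ_head (r : ℕ) (rs : List ℕ) (as : List (ZMod q)) :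
    build q ((r + 1) :: rs) as = 0 :: build q (r :: rs) as := by
  cases as <;> simp [build, List.replicate_succ]

lemma build_zeroRuns (x : List (ZMod q)) :
    build q (zeroRuns q x) (x.filter (fun a => a ≠ 0)) = x := by
  induction x with
  | nil => simp [zeroRuns, build]
  | cons a x ih =>
    by_cases h : a = 0
    · subst h
      rw [zeroRuns_cons_zero]
      have hnn := zeroRuns_ne_nil (q := q) x
      obtain ⟨r, rs, hz⟩ : ∃ r rs, zeroRuns q x = r :: rs := by
        cases hz : zeroRuns q x with
        | nil => exact absurd hz hnn
        | cons r rs => exact ⟨r, rs, rfl⟩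
      rw [hz] at ih ⊢
      simp only [List.headD_cons, List.tail_cons]
      rw [List.filter_cons_of_neg (by simp), build_succ_head, ih]
    · rw [zeroRuns_cons_ne a x h, List.filter_cons_of_pos (by simpa)]
      show List.replicate 0 0 ++ a :: build q (zeroRuns q x) _ = _
      simp only [List.replicate_zero, List.nil_append, List.cons.injEq]
      exact ⟨trivial, ih⟩


lemma ins_front (x : List (ZMod q)) : Ins q k x (List.replicate k 0 ++ x) :=
  ⟨0, Nat.zero_le _, by simp⟩

lemma ins_prefix {x y : List (ZMod q)} (p : List (ZMod q)) (h : Ins q k x y) :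
    Ins q k (p ++ x) (p ++ y) := by
  obtain ⟨j, hj, rfl⟩ := h
  refine ⟨p.length + j, by simp; omega, ?_⟩
  rw [List.take_length_add_append j, List.drop_length_add_append j]
  simp

lemma indelN_cast {a b a' b' : ℕ} {x y : List (ZMod q)} (h : IndelN q k a b x y)
    (ha : a = a') (hb : b = b') : IndelN q k a' b' x y := ha ▸ hb ▸ h

lemma indelN_comp {a b a' b' : ℕ} {x z y : List (ZMod q)} (h1 : IndelN q k a b x z)
    (h2 : IndelN q k a' b' z y) : IndelN q k (a + a') (b + b') x y := by
  induction h1 with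
  | refl => exact indelN_cast h2 (by omega) (by omega)
  | ins hi _ ih => exact indelN_cast (IndelN.ins hi (ih h2)) (by omega) (by omega)
  | del hd _ ih => exact indelN_cast (IndelN.del hd (ih h2)) (by omega) (by omega)

lemma indelN_prefix {a b : ℕ} {x y : List (ZMod q)} (p : List (ZMod q))
    (h : IndelN q k a b x y) : IndelN q k a b (p ++ x) (p ++ y) := by
  induction h with
  | refl => exact .refl _
  | ins hi _ ih => exact .ins (ins_prefix p hi) ih
  | del hd _ ih => exact .del (ins_prefix p hd) ih

lemma indelN_snoc_del {a b : ℕ} {x z y : List (ZMod q)} (h1 : IndelN q k a b x z)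
    (h2 : Del q k z y) : IndelN q k a (b + 1) x y := by
  induction h1 with
  | refl => exact .del h2 (.refl _)
  | ins hi _ ih => exact .ins hi (ih h2)
  | del hd _ ih => exact indelN_cast (IndelN.del hd (ih h2)) rfl (by omega)

lemma indelN_rev {a b : ℕ} {x y : List (ZMod q)} (h : IndelN q k a b y x) (hb : b = 0) :
    IndelN q k 0 a x y := by
  induction h with
  | refl => exact .refl _
  | ins hi _ ih =>
    have := indelN_snoc_del (ih hb) hi
    simpa using this
  | del _ _ _ => omega

lemma indelN_front (j : ℕ) (x : List (ZMod q)) :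
    IndelN q k j 0 x (List.replicate (k * j) 0 ++ x) := by
  induction j generalizing x with
  | zero => simpa using IndelN.refl x
  | succ n ih =>
    have h2 : IndelN q k n 0 (List.replicate k 0 ++ x)
        (List.replicate (k * n) 0 ++ (List.replicate k 0 ++ x)) := ih _
    have := IndelN.ins (ins_front x) h2
    rw [← List.append_assoc, ← List.replicate_add] at this
    have he : k * n + k = k * (n + 1) := by ring
    rwa [he] at this

lemma reach_ins (as : List (ZMod q)) (rs c : List ℕ)
    (h : rs.length = as.length + 1) (hc : c.length = rs.length) :
    IndelN q k c.sum 0 (build q rs as)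
      (build q (List.zipWith (fun r ci => r + k * ci) rs c) as) := by
  induction as generalizing rs c with
  | nil =>
    match rs, c, h, hc with
    | [r], [c0], _, _ =>
      show IndelN q k (c0 + 0) 0 (List.replicate r 0) (build q [r + k * c0] [])
      have := indelN_front (q := q) (k := k) c0 (List.replicate r 0)
      rw [← List.replicate_add] at this
      show IndelN q k (c0 + 0) 0 (List.replicate r 0) (List.replicate (r + k * c0) 0)
      have he : k * c0 + r = r + k * c0 := by ring
      rw [he] at this
      simpa using this
  | cons a as ih =>
    match rs, c, h, hc with
    | r :: rs', c0 :: c', h, hc =>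
      have h' : rs'.length = as.length + 1 := by simpa using h
      have hc' : c'.length = rs'.length := by simpa using hc
      show IndelN q k (c0 :: c').sum 0 (List.replicate r 0 ++ a :: build q rs' as)
        (List.replicate (r + k * c0) 0 ++ a :: build q (List.zipWith (fun r ci => r + k * ci) rs' c') as)
      have step1 : IndelN q k c0 0 (List.replicate r 0 ++ a :: build q rs' as)
          (List.replicate (r + k * c0) 0 ++ a :: build q rs' as) := by
        have := indelN_front (q := q) (k := k) c0 (List.replicate r 0 ++ a :: build q rs' as)
        rw [← List.append_assoc, ← List.replicate_add] at this
        have he : k * c0 + r = r + k * c0 := by ring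
        rwa [he] at this
      have step2 : IndelN q k c'.sum 0
          (List.replicate (r + k * c0) 0 ++ a :: build q rs' as)
          (List.replicate (r + k * c0) 0 ++ a :: build q (List.zipWith (fun r ci => r + k * ci) rs' c') as) := by
        have := indelN_prefix (List.replicate (r + k * c0) 0 ++ [a]) (ih rs' c' h' hc')
        simpa using this
      have := indelN_comp step1 step2
      simpa using this

lemma reach (as : List (ZMod q)) (rs cs ds : List ℕ)
    (h : rs.length = as.length + 1) (hc : cs.length = rs.length) (hd : ds.length = rs.length)
    (hdle : ∀ (i : ℕ) (h1 : i < rs.length) (h2 : i < ds.length) (h3 : i < cs.length),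
      k * ds[i] ≤ rs[i] + k * cs[i]) :
    IndelN q k cs.sum ds.sum (build q rs as)
      (build q (List.zipWith (fun v di => v - k * di)
        (List.zipWith (fun r ci => r + k * ci) rs cs) ds) as) := by
  set mid := List.zipWith (fun r ci => r + k * ci) rs cs with hmid
  set fin := List.zipWith (fun v di => v - k * di) mid ds with hfin
  have hmidlen : mid.length = rs.length := by simp [hmid]; omega
  have hfinlen : fin.length = rs.length := by simp [hfin]; omega
  have h1 : IndelN q k cs.sum 0 (build q rs as) (build q mid as) := reach_ins as rs cs h hc
  have key : List.zipWith (fun r ci => r + k * ci) fin ds = mid := by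
    apply List.ext_getElem
    · simp; omega
    · intro i hi1 hi2
      have hirs : i < rs.length := by omega
      have hle := hdle i hirs (by omega) (by omega)
      simp only [hfin, hmid, List.getElem_zipWith] at *
      omega
  have h2 : IndelN q k ds.sum 0 (build q fin as) (build q mid as) := by
    have := reach_ins (q := q) (k := k) as fin ds (by omega) (by omega)
    rwa [key] at this
  have h3 : IndelN q k 0 ds.sum (build q mid as) (build q fin as) := indelN_rev h2 rfl
  have := indelN_comp h1 h3
  simpa using this


lemma countP_ofFn {d : ℕ} (f : Fin d → ℕ) (p : ℕ → Bool) :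
    (List.ofFn f).countP p = (Finset.univ.filter (fun i => p (f i))).card := by
  rw [Finset.card_filter]
  induction d with
  | zero => simp
  | succ d ih =>
    rw [List.ofFn_succ, List.countP_cons, Fin.sum_univ_succ, ih]
    by_cases h : p (f 0) <;> simp [h] <;> omega

lemma card_adt (d n : ℕ) : (Finset.Nat.antidiagonalTuple d n).card = (d + n - 1).choose n := by
  have e : {c // c ∈ Finset.Nat.antidiagonalTuple d n} ≃ Sym (Fin d) n := by
    refine
      { toFun := fun c => ⟨∑ i, Multiset.replicate (c.1 i) i, ?_⟩
        invFun := fun σ => ⟨fun i => σ.1.count i, ?_⟩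
        left_inv := ?_, right_inv := ?_ }
    · have hc := (Finset.Nat.mem_antidiagonalTuple).1 c.2
      rw [Multiset.card_sum]
      simpa using hc
    · rw [Finset.Nat.mem_antidiagonalTuple]
      have h1 : ∑ i : Fin d, Multiset.count i (σ.1 : Multiset (Fin d)) = Multiset.card σ.1 := by
        rw [← Multiset.toFinset_sum_count_eq]
        exact (Finset.sum_subset (Finset.subset_univ _) fun i _ hi => by
          simpa [Multiset.count_eq_zero] using hi).symm
      rw [h1, σ.2]
    · rintro ⟨c, hc⟩
      ext i
      simp [Multiset.count_sum', Multiset.count_replicate]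
    · rintro ⟨σ, hσ⟩
      apply Subtype.ext
      show ∑ x : Fin d, Multiset.replicate (Multiset.count x σ) x = σ
      conv_rhs => rw [← Multiset.toFinset_sum_count_nsmul_eq σ]
      rw [Finset.sum_subset (Finset.subset_univ σ.toFinset)]
      · exact Finset.sum_congr rfl fun i _ => (Multiset.nsmul_singleton i _).symm
      · intro i _ hi
        simp [Multiset.count_eq_zero.1 (by simpa using hi)]
  calc (Finset.Nat.antidiagonalTuple d n).card
      = Fintype.card {c // c ∈ Finset.Nat.antidiagonalTuple d n} := (Fintype.card_coe _).symm
    _ = Fintype.card (Sym (Fin d) n) := Fintype.card_congr e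
    _ = (d + n - 1).choose n := by rw [Sym.card_sym_eq_choose]; simp

lemma key (q n k s t w m : ℕ) (hk : 1 ≤ k) (hst : s ≤ t)
    (x : List (ZMod q)) (hxlen : x.length = n) (hxw : wt q x = w)
    (hxm : m ≤ (zeroRuns q x).countP (fun r => decide (k ≤ r))) :
    ∃ Y : Finset (List (ZMod q)),
      (w + s).choose s * ((m - s).choose (t - s)) ≤ Y.card ∧
      (∀ y ∈ Y, y.length + k * (t - s) = n + k * s) ∧
      (∀ y ∈ Y, IndelN q k s (t - s) x y) := by
  classical
  set rsx := zeroRuns q x with hrsx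
  set asx := x.filter (fun a => a ≠ 0) with hasx
  have hasw : asx.length = w := by
    rw [hasx, ← List.countP_eq_length_filter, ← hxw]; rfl
  have hrsl : rsx.length = w + 1 := by rw [hrsx, length_zeroRuns, hxw]
  set rf : Fin (w + 1) → ℕ := fun i => rsx.getD i 0 with hrf
  have hofn : List.ofFn rf = rsx := by
    apply List.ext_getElem
    · simp [hrsl]
    · intro i h1 h2
      rw [List.getElem_ofFn]
      exact List.getD_eq_getElem rsx 0 h2
  set D : Finset (Fin (w + 1)) := Finset.univ.filter (fun i => k ≤ rf i) with hDdef
  have hD : m ≤ D.card := by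
    have : rsx.countP (fun r => decide (k ≤ r)) = D.card := by
      rw [← hofn, countP_ofFn]
      simp [hDdef]
    omega
  set A := Finset.Nat.antidiagonalTuple (w + 1) s with hA
  set P : Finset ((Fin (w + 1) → ℕ) × Finset (Fin (w + 1))) :=
    A.biUnion (fun c => ((D \ (Finset.univ.filter fun i => c i ≠ 0)).powersetCard (t - s)).image
      (fun S => (c, S))) with hP
  -- facts about members of P
  have hPmem : ∀ p ∈ P, (∑ i, p.1 i = s) ∧ p.2 ⊆ D ∧ p.2.card = t - s ∧
      (∀ i ∈ p.2, p.1 i = 0) := by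
    intro p hp
    rw [hP, Finset.mem_biUnion] at hp
    obtain ⟨c, hcA, hpc⟩ := hp
    rw [Finset.mem_image] at hpc
    obtain ⟨S, hS, rfl⟩ := hpc
    rw [Finset.mem_powersetCard] at hS
    obtain ⟨hSsub, hScard⟩ := hS
    refine ⟨Finset.Nat.mem_antidiagonalTuple.1 hcA, ?_, hScard, ?_⟩
    · exact hSsub.trans (Finset.sdiff_subset)
    · intro i hi
      have := hSsub hi
      rw [Finset.mem_sdiff] at this
      simpa using this.2
  set Phi : (Fin (w + 1) → ℕ) × Finset (Fin (w + 1)) → List (ZMod q) :=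
    fun p => build q (List.ofFn fun i => if i ∈ p.2 then rf i - k else rf i + k * p.1 i) asx
    with hPhi
  have hasne : ∀ a ∈ asx, a ≠ 0 := by
    intro a ha
    rw [hasx, List.mem_filter] at ha
    simpa using ha.2
  have hzr : ∀ p, zeroRuns q (Phi p)
      = List.ofFn (fun i => if i ∈ p.2 then rf i - k else rf i + k * p.1 i) := by
    intro p
    apply zeroRuns_build
    · simp [hasw]
    · exact hasne
  -- cardinality of P
  have hPcard : (w + s).choose s * ((m - s).choose (t - s)) ≤ P.card := by
    rw [hP, Finset.card_biUnion]
    · have hbound : ∀ c ∈ A, (m - s).choose (t - s) ≤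
          (((D \ (Finset.univ.filter fun i => c i ≠ 0)).powersetCard (t - s)).image
            (fun S => (c, S))).card := by
        intro c hcA
        rw [Finset.card_image_of_injective _ (fun S S' hSS => by simpa using hSS),
          Finset.card_powersetCard]
        apply Nat.choose_le_choose
        have hsupp : (Finset.univ.filter fun i => c i ≠ 0).card ≤ s := by
          have hsum := Finset.Nat.mem_antidiagonalTuple.1 hcA
          calc (Finset.univ.filter fun i => c i ≠ 0).card
              = ∑ i ∈ (Finset.univ.filter fun i => c i ≠ 0), 1 := by rw [Finset.card_eq_sum_ones]
            _ ≤ ∑ i ∈ (Finset.univ.filter fun i => c i ≠ 0), c i := by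
                apply Finset.sum_le_sum
                intro i hi
                rw [Finset.mem_filter] at hi
                omega
            _ ≤ ∑ i, c i := Finset.sum_le_sum_of_subset (Finset.filter_subset _ _)
            _ = s := hsum
        have := Finset.le_card_sdiff (Finset.univ.filter fun i => c i ≠ 0) D
        omega
      calc (w + s).choose s * ((m - s).choose (t - s))
          = A.card * ((m - s).choose (t - s)) := by
            rw [hA, card_adt]
            have he : w + 1 + s - 1 = w + s := by omega
            rw [he]
        _ ≤ ∑ c ∈ A, (((D \ (Finset.univ.filter fun i => c i ≠ 0)).powersetCard (t - s)).image
            (fun S => (c, S))).card := Finset.card_nsmul_le_sum A _ _ hbound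
    · intro c hc c' hc' hne
      simp only [Finset.disjoint_left, Finset.mem_image]
      rintro p ⟨S, hS, rfl⟩ ⟨S', hS', heq⟩
      exact hne (by simpa using (Prod.ext_iff.1 heq.symm).1)
  -- injectivity of Phi on P
  have hinj : Set.InjOn Phi P := by
    intro p hp p' hp' heq
    obtain ⟨hp1, hp2, hp3, hp4⟩ := hPmem p hp
    obtain ⟨hp1', hp2', hp3', hp4'⟩ := hPmem p' hp'
    have hzz := (hzr p).symm.trans ((congrArg (zeroRuns q) heq).trans (hzr p'))
    rw [List.ofFn_inj] at hzz
    have hptw : ∀ i : Fin (w + 1),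
        (if i ∈ p.2 then rf i - k else rf i + k * p.1 i)
          = (if i ∈ p'.2 then rf i - k else rf i + k * p'.1 i) := fun i => congrFun hzz i
    have hSeq : p.2 = p'.2 := by
      ext i
      have h1 := hptw i
      constructor
      · intro hi
        by_contra hi'
        have hk1 : k ≤ rf i := by
          have := hp2 hi
          rw [hDdef, Finset.mem_filter] at this
          exact this.2
        rw [if_pos hi, if_neg hi'] at h1
        omega
      · intro hi
        by_contra hi'
        have hk1 : k ≤ rf i := by
          have := hp2' hi
          rw [hDdef, Finset.mem_filter] at this
          exact this.2
        rw [if_neg hi', if_pos hi] at h1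
        omega
    have hceq : p.1 = p'.1 := by
      funext i
      have h1 := hptw i
      by_cases hi : i ∈ p.2
      · rw [hp4 i hi, hp4' i (hSeq ▸ hi)]
      · rw [if_neg hi, if_neg (hSeq ▸ hi)] at h1
        have : k * p.1 i = k * p'.1 i := by omega
        exact Nat.eq_of_mul_eq_mul_left (by omega) this
    exact Prod.ext hceq hSeq
  refine ⟨P.image Phi, ?_, ?_, ?_⟩
  · rw [Finset.card_image_of_injOn hinj]
    exact hPcard
  · -- length
    intro y hy
    rw [Finset.mem_image] at hy
    obtain ⟨p, hp, rfl⟩ := hy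
    obtain ⟨hp1, hp2, hp3, hp4⟩ := hPmem p hp
    have hlb : (Phi p).length
        = (List.ofFn fun i => if i ∈ p.2 then rf i - k else rf i + k * p.1 i).sum + w := by
      rw [hPhi]
      rw [length_build _ _ (by simp [hasw]), hasw]
    rw [hlb, List.sum_ofFn]
    -- sum computation
    have hEsplit : ∑ i ∈ p.2, (if i ∈ p.2 then rf i - k else rf i + k * p.1 i)
          + ∑ i ∈ p.2ᶜ, (if i ∈ p.2 then rf i - k else rf i + k * p.1 i)
        = ∑ i, (if i ∈ p.2 then rf i - k else rf i + k * p.1 i) :=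
      Finset.sum_add_sum_compl p.2 _
    have hE2 : ∑ i ∈ p.2, (if i ∈ p.2 then rf i - k else rf i + k * p.1 i)
        + p.2.card * k = ∑ i ∈ p.2, rf i := by
      rw [← Finset.sum_const_nat (m := k) (fun _ _ => rfl), ← Finset.sum_add_distrib]
      apply Finset.sum_congr rfl
      intro i hi
      rw [if_pos hi]
      have hk1 : k ≤ rf i := by
        have := hp2 hi
        rw [hDdef, Finset.mem_filter] at this
        exact this.2
      omega
    have hE4 : ∑ i ∈ p.2ᶜ, (if i ∈ p.2 then rf i - k else rf i + k * p.1 i)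
        = ∑ i ∈ p.2ᶜ, rf i + k * s := by
      have : ∑ i ∈ p.2ᶜ, (if i ∈ p.2 then rf i - k else rf i + k * p.1 i)
          = ∑ i ∈ p.2ᶜ, (rf i + k * p.1 i) := by
        apply Finset.sum_congr rfl
        intro i hi
        rw [Finset.mem_compl] at hi
        rw [if_neg hi]
      rw [this, Finset.sum_add_distrib, ← Finset.mul_sum]
      congr 2
      have hsplitc : ∑ i ∈ p.2, p.1 i + ∑ i ∈ p.2ᶜ, p.1 i = ∑ i, p.1 i :=
        Finset.sum_add_sum_compl p.2 _
      have hz : ∑ i ∈ p.2, p.1 i = 0 := Finset.sum_eq_zero hp4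
      omega
    have hE6 : (∑ i ∈ p.2, rf i + ∑ i ∈ p.2ᶜ, rf i) + w = n := by
      have : ∑ i ∈ p.2, rf i + ∑ i ∈ p.2ᶜ, rf i = ∑ i, rf i :=
        Finset.sum_add_sum_compl p.2 _
      rw [this]
      have h7 : ∑ i, rf i = rsx.sum := by rw [← hofn, List.sum_ofFn]
      have h8 := sum_zeroRuns (q := q) x
      rw [h7, ← hrsx] at *
      omega
    have hcardk : p.2.card * k = k * (t - s) := by rw [hp3, mul_comm]
    generalize hg1 : k * (t - s) = K1 at *
    generalize hg2 : k * s = K2 at *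
    omega
  · -- reachability
    intro y hy
    rw [Finset.mem_image] at hy
    obtain ⟨p, hp, rfl⟩ := hy
    obtain ⟨hp1, hp2, hp3, hp4⟩ := hPmem p hp
    have hres := reach (q := q) (k := k) asx rsx (List.ofFn p.1)
      (List.ofFn (fun i => if i ∈ p.2 then 1 else 0))
      (by simp [hrsl, hasw]) (by simp [hrsl]) (by simp [hrsl]) ?_
    · have hsum1 : (List.ofFn p.1).sum = s := by rw [List.sum_ofFn]; exact hp1
      have hsum2 : (List.ofFn (fun i => if i ∈ p.2 then 1 else 0)).sum = t - s := by
        rw [List.sum_ofFn]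
        rw [Finset.sum_ite_mem]
        simpa using hp3
      rw [hsum1, hsum2] at hres
      have hlists : List.zipWith (fun v di => v - k * di)
          (List.zipWith (fun r ci => r + k * ci) rsx (List.ofFn p.1))
          (List.ofFn (fun i => if i ∈ p.2 then 1 else 0))
          = List.ofFn (fun i => if i ∈ p.2 then rf i - k else rf i + k * p.1 i) := by
        apply List.ext_getElem
        · simp [hrsl]
        · intro i h1 h2
          have hiw : i < w + 1 := by simpa using h2
          have hirs : i < rsx.length := by omega
          simp only [List.getElem_zipWith, List.getElem_ofFn]
          have hrfi : rsx[i] = rf ⟨i, hiw⟩ :=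
            (List.getD_eq_getElem rsx 0 hirs).symm
          rw [hrfi]
          by_cases hi : (⟨i, hiw⟩ : Fin (w + 1)) ∈ p.2
          · rw [if_pos hi, if_pos hi, hp4 _ hi]
            simp
          · rw [if_neg hi, if_neg hi]
            simp
      rw [hlists] at hres
      have hx : build q rsx asx = x := by
        rw [hrsx, hasx]
        exact build_zeroRuns x
      rw [hx] at hres
      exact hres
    · intro i h1 h2 h3
      have hiw : i < w + 1 := by simpa [hrsl] using h1
      have hg2 : (List.ofFn fun i => if i ∈ p.2 then 1 else 0)[i]
          = (if (⟨i, hiw⟩ : Fin (w + 1)) ∈ p.2 then 1 else 0) := by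
        rw [List.getElem_ofFn]
      rw [hg2]
      by_cases hi : (⟨i, hiw⟩ : Fin (w + 1)) ∈ p.2
      · rw [if_pos hi]
        have hk1 : k ≤ rf ⟨i, hiw⟩ := by
          have := hp2 hi
          rw [hDdef, Finset.mem_filter] at this
          exact this.2
        have hrfi : rf ⟨i, hiw⟩ = rsx[i] := List.getD_eq_getElem rsx 0 h1
        rw [hrfi] at hk1
        have hm1 : k * 1 = k := by ring
        rw [hm1]
        omega
      · rw [if_neg hi]
        simp


end Stmt16

/-- sphere-packing bound: if `C ⊆ (ℤ_q)^n` corrects `t` insertions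
and deletions of blocks `0^k`, every codeword has weight `w` and at least `m` runs
of zeros of length `≥ k`, and `0 ≤ s ≤ min(t,m)`, then
`|C|·C(w+s,s)·C(m-s,t-s) ≤ q^{n+k(2s-t)}` (assuming `n + k(2s-t) ≥ 0`). -/
theorem stmt16 (q n k s t w m : ℕ) (hq : 2 ≤ q) (hn : 1 ≤ n) (hk : 1 ≤ k)
    (hst : s ≤ t) (hsm : s ≤ m) (hlen : k * t ≤ n + k * (2 * s))
    (C : Set (List (ZMod q)))
    (hClen : ∀ x ∈ C, x.length = n)
    (hCw : ∀ x ∈ C, wt q x = w)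
    (hCm : ∀ x ∈ C, m ≤ (zeroRuns q x).countP (fun r => decide (k ≤ r)))
    (hcorr : ∀ x ∈ C, ∀ x' ∈ C, ∀ y,
      (∃ a b, a + b ≤ t ∧ IndelN q k a b x y) →
      (∃ a b, a + b ≤ t ∧ IndelN q k a b x' y) → x = x') :
    C.ncard * Nat.choose (w + s) s * Nat.choose (m - s) (t - s)
      ≤ q ^ (n + k * (2 * s) - k * t) := by
  classical
  haveI : NeZero q := ⟨by omega⟩
  by_cases hfin : C.Finite
  swap
  · rw [Set.Infinite.ncard (by exact hfin)]
    simp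
  set L := n + k * (2 * s) - k * t with hL
  have hkey := fun x (hx : x ∈ C) =>
    Stmt16.key q n k s t w m hk hst x (hClen x hx) (hCw x hx) (hCm x hx)
  choose! Y hY1 hY2 hY3 using hkey
  set CF := hfin.toFinset with hCF
  have hmemCF : ∀ x, x ∈ CF ↔ x ∈ C := fun x => hfin.mem_toFinset
  have hdisj : ∀ x ∈ CF, ∀ x' ∈ CF, x ≠ x' → Disjoint (Y x) (Y x') := by
    intro x hx x' hx' hne
    rw [Finset.disjoint_left]
    intro y hy hy'
    exact hne (hcorr x ((hmemCF x).1 hx) x' ((hmemCF x').1 hx') y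
      ⟨s, t - s, by omega, hY3 x ((hmemCF x).1 hx) y hy⟩
      ⟨s, t - s, by omega, hY3 x' ((hmemCF x').1 hx') y hy'⟩)
  have hcard : CF.card * ((w + s).choose s * ((m - s).choose (t - s)))
      ≤ (CF.biUnion Y).card := by
    rw [Finset.card_biUnion hdisj]
    exact Finset.card_nsmul_le_sum CF _ _ (fun x hx => hY1 x ((hmemCF x).1 hx))
  have hlenY : ∀ y ∈ CF.biUnion Y, y.length = L := by
    intro y hy
    rw [Finset.mem_biUnion] at hy
    obtain ⟨x, hx, hy⟩ := hy
    have h2 := hY2 x ((hmemCF x).1 hx) y hy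
    have he1 : k * (t - s) + k * s = k * t := by
      rw [← Nat.mul_add]
      congr 1
      omega
    have he2 : k * s + k * s = k * (2 * s) := by ring_nf
    rw [hL]
    generalize hg1 : k * (t - s) = K1 at *
    generalize hg2 : k * s = K2 at *
    generalize hg3 : k * t = K3 at *
    generalize hg4 : k * (2 * s) = K4 at *
    omega
  have hupper : (CF.biUnion Y).card ≤ q ^ L := by
    have hinj : Set.InjOn (fun (y : List (ZMod q)) => (fun i : Fin L => y.getD i 0))
        (CF.biUnion Y) := by
      intro y hy y' hy' heq
      have hl1 : y.length = L := hlenY y hy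
      have hl2 : y'.length = L := hlenY y' hy'
      apply List.ext_getElem (by omega)
      intro i h1 h2
      have hiL : i < L := by omega
      have h3 := congrFun heq ⟨i, hiL⟩
      simp only at h3
      rwa [List.getD_eq_getElem y 0 h1, List.getD_eq_getElem y' 0 h2] at h3
    calc (CF.biUnion Y).card
        ≤ (Finset.univ : Finset (Fin L → ZMod q)).card :=
          Finset.card_le_card_of_injOn _ (fun y _ => Finset.mem_univ _) hinj
      _ = q ^ L := by
          rw [Finset.card_univ, Fintype.card_fun]
          simp [ZMod.card]
  have hnc : C.ncard = CF.card := by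
    rw [hCF]
    exact Set.ncard_eq_toFinset_card C hfin
  calc C.ncard * Nat.choose (w + s) s * Nat.choose (m - s) (t - s)
      = CF.card * ((w + s).choose s * ((m - s).choose (t - s))) := by rw [hnc, mul_assoc]
    _ ≤ (CF.biUnion Y).card := hcard
    _ ≤ q ^ L := hupper
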